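/- Let F : 𝒜 ⇄ 𝒜' : G be an adjoint pair of additive functors between abelian categories, 𝒦 a class of objects of 𝒜 such that every object of 𝒜 receives an epimorphism from an object of 𝒦, and 𝒦' a class of objects of 𝒜' with F(𝒦) ⊆ 𝒦'. Then G preserves epimorphisms whose kernel lies in 𝒦'^⊥. -/

import Mathlib

open CategoryTheory Limits

universe v u v' u'

variable {𝒜 : Type u} [Category.{v} 𝒜] [Abelian 𝒜]

/-- Splitting formulation of the right orthogonal class: `Y ∈ rightPerpSplit K` iff
every short exact sequence `Y ↣ E ↠ Q` with `Q ∈ K` splits. -/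
def rightPerpSplit (K : Set 𝒜) : Set 𝒜 :=
  {Y | ∀ ⦃E Q : 𝒜⦄ (i : Y ⟶ E) (p : E ⟶ Q) (w : i ≫ p = 0),
    (ShortComplex.mk i p w).ShortExact → Q ∈ K → ∃ r : E ⟶ Y, i ≫ r = 𝟙 Y}

/-- If every object of `𝒜` receives an epimorphism from an object of `𝒦` and
`F(𝒦) ⊆ 𝒦'`, then the right adjoint `G` preserves epimorphisms whose kernel lies
in `𝒦'^⊥`. -/
theorem statement6 {𝒜' : Type u'} [Category.{v'} 𝒜'] [Abelian 𝒜']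
    (F : 𝒜 ⥤ 𝒜') (G : 𝒜' ⥤ 𝒜) [F.Additive] [G.Additive] (adj : F ⊣ G)
    (K : Set 𝒜) (K' : Set 𝒜')
    (henough : ∀ A : 𝒜, ∃ (X : 𝒜) (p : X ⟶ A), X ∈ K ∧ Epi p)
    (hFK : ∀ X ∈ K, F.obj X ∈ K')
    {E Q : 𝒜'} (p : E ⟶ Q) (hp : Epi p) (hker : kernel p ∈ rightPerpSplit K') :
    Epi (G.map p) := by
  obtain ⟨X, q, hXK, hq⟩ := henough (G.obj Q)
  -- the adjoint map `F X ⟶ Q`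
  set q' : F.obj X ⟶ Q := (adj.homEquiv X Q).symm q with hq'
  -- pullback of `p` along `q'`
  let P := pullback p q'
  let i : kernel p ⟶ P := pullback.lift (kernel.ι p) 0 (by simp)
  have hif : i ≫ pullback.fst p q' = kernel.ι p := pullback.lift_fst _ _ _
  have w : i ≫ pullback.snd p q' = 0 := pullback.lift_snd _ _ _
  have hmono : Mono i := by
    have : Mono (i ≫ pullback.fst p q') := by rw [hif]; infer_instance
    exact mono_of_mono i (pullback.fst p q')
  -- `i` is the kernel of `pullback.snd`
  let hlim : IsLimit (KernelFork.ofι i w) :=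
    KernelFork.IsLimit.ofι i w
      (fun {T} z hz => kernel.lift p (z ≫ pullback.fst p q') (by
        rw [Category.assoc, pullback.condition, ← Category.assoc, hz, zero_comp]))
      (fun {T} z hz => by
        apply pullback.hom_ext
        · simp only [Category.assoc, hif, kernel.lift_ι]
        · simp only [Category.assoc, w, comp_zero, hz])
      (fun {T} z hz m hm => by
        rw [← cancel_mono i, hm]
        apply pullback.hom_ext
        · simp only [Category.assoc, hif, kernel.lift_ι]
        · simp only [Category.assoc, w, comp_zero, hz])
  have hse : (ShortComplex.mk i (pullback.snd p q') w).ShortExact :=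
    { exact := ShortComplex.exact_of_f_is_kernel _ hlim
      mono_f := hmono
      epi_g := Abelian.epi_pullback_of_epi_f p q' }
  obtain ⟨r, hr⟩ := hker i (pullback.snd p q') w hse (hFK X hXK)
  -- a section of `pullback.snd`
  let spl := ShortComplex.Splitting.ofExactOfRetraction _ hse.exact r hr hse.epi_g
  have hs : spl.s ≫ pullback.snd p q' = 𝟙 (F.obj X) := spl.s_g
  -- the lift `F X ⟶ E`
  let h : F.obj X ⟶ E := spl.s ≫ pullback.fst p q'
  have hhp : h ≫ p = q' := by
    rw [Category.assoc, pullback.condition, ← Category.assoc, hs, Category.id_comp]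
  have key : (adj.homEquiv X E h) ≫ G.map p = q := by
    rw [← Adjunction.homEquiv_naturality_right, hhp, hq', Equiv.apply_symm_apply]
  have : Epi ((adj.homEquiv X E h) ≫ G.map p) := by rw [key]; exact hq
  exact epi_of_epi (adj.homEquiv X E h) (G.map p)
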